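/- Let $G$ be a Cameron--Walker graph whose supporting connected bipartite graph is the complete bipartite graph $K_{n,m}$ with parts $X = \{x_1,\ldots,x_n\}$ and $Y = \{y_1,\ldots,y_m\}$, with leaves $z_{k,l}$ ($1 \leq l \leq f_k$) attached to $x_k$ and pendant triangle vertices $w_{j,l}^+, w_{j,l}^-$ ($1 \leq l \leq t_j$) attached to $y_j$, where $t_j \geq 1$ exactly for $j \leq m'$. Then every maximal independent set of $G$ has one of the two forms: (I) $\{y_{m'+1},\ldots,y_m\} \cup \{z_{k,l} : \text{all } k,l\} \cup \{y_i : i \in I\} \cup \{w_{i',j}^{\epsilon_{i',j}} : i' \in [m'] \setminus I, 1 \leq j \leq t_{i'}\}$ for some $I \subseteq [m']$ and signs $\epsilon$; or (II) $\{x_j : j \in J\} \cup \{z_{j',i} : j' \in [n] \setminus J, 1 \leq i \leq f_{j'}\} \cup \{w_{k,l}^{\epsilon_{k,l}} : 1 \leq k \leq m', 1 \leq l \leq t_k\}$ for some nonempty $J \subseteq [n]$ and signs $\epsilon$. -/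

import Mathlib

open scoped Classical

/-- Vertex type of a Cameron--Walker graph: the bipartition classes `Fin n` and `Fin m`
of the supporting bipartite graph, the leaves (the `l`-th leaf attached to the `i`-th
vertex of `X` is `⟨i, l⟩`), and the pairs of degree-2 vertices of the pendant triangles
(the `l`-th triangle attached to the `j`-th vertex of `Y` has vertices `⟨j, l, true⟩`
and `⟨j, l, false⟩`). -/
abbrev CWVert (n m : ℕ) (f : Fin n → ℕ) (t : Fin m → ℕ) : Type :=
  (Fin n ⊕ Fin m) ⊕ ((Σ i : Fin n, Fin (f i)) ⊕ (Σ j : Fin m, Fin (t j) × Bool))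

/-- The Cameron--Walker graph determined by a bipartite adjacency relation
`R : Fin n → Fin m → Prop` between the parts `X = Fin n` and `Y = Fin m`,
with `f i` leaves attached to the `i`-th vertex of `X` and `t j` pendant triangles
attached to the `j`-th vertex of `Y`. -/
def cwGraph (n m : ℕ) (f : Fin n → ℕ) (t : Fin m → ℕ) (R : Fin n → Fin m → Prop) :
    SimpleGraph (CWVert n m f t) :=
  SimpleGraph.fromRel (fun a b =>
    (∃ i j, a = Sum.inl (Sum.inl i) ∧ b = Sum.inl (Sum.inr j) ∧ R i j) ∨
    (∃ (i : Fin n) (l : Fin (f i)), a = Sum.inl (Sum.inl i) ∧ b = Sum.inr (Sum.inl ⟨i, l⟩)) ∨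
    (∃ (j : Fin m) (p : Fin (t j) × Bool),
      a = Sum.inl (Sum.inr j) ∧ b = Sum.inr (Sum.inr ⟨j, p⟩)) ∨
    (∃ (j : Fin m) (l : Fin (t j)),
      a = Sum.inr (Sum.inr ⟨j, (l, true)⟩) ∧ b = Sum.inr (Sum.inr ⟨j, (l, false)⟩)))

/-- An independent set of a graph. -/
def IsIndepSet {V : Type*} (G : SimpleGraph V) (A : Finset V) : Prop :=
  ∀ u ∈ A, ∀ v ∈ A, ¬ G.Adj u v

/-- A maximal independent set of a graph. -/
def IsMaxIndepSet {V : Type*} (G : SimpleGraph V) (A : Finset V) : Prop :=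
  IsIndepSet G A ∧ ∀ B : Finset V, IsIndepSet G B → A ⊆ B → B = A

section Aux
variable {n m : ℕ} {f : Fin n → ℕ} {t : Fin m → ℕ}


lemma adj_xy (i : Fin n) (j : Fin m) : (cwGraph n m f t (fun _ _ => True)).Adj (Sum.inl (Sum.inl i)) (Sum.inl (Sum.inr j)) := by
  rw [cwGraph, SimpleGraph.fromRel_adj]
  exact ⟨by simp, Or.inl (Or.inl ⟨i, j, rfl, rfl, trivial⟩)⟩

lemma adj_xz (i : Fin n) (l : Fin (f i)) :
    (cwGraph n m f t (fun _ _ => True)).Adj (Sum.inl (Sum.inl i)) (Sum.inr (Sum.inl ⟨i, l⟩)) := by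
  rw [cwGraph, SimpleGraph.fromRel_adj]
  exact ⟨by simp, Or.inl (Or.inr (Or.inl ⟨i, l, rfl, rfl⟩))⟩

lemma adj_yw (j : Fin m) (p : Fin (t j) × Bool) :
    (cwGraph n m f t (fun _ _ => True)).Adj (Sum.inl (Sum.inr j)) (Sum.inr (Sum.inr ⟨j, p⟩)) := by
  rw [cwGraph, SimpleGraph.fromRel_adj]
  exact ⟨by simp, Or.inl (Or.inr (Or.inr (Or.inl ⟨j, p, rfl, rfl⟩)))⟩

lemma adj_ww (j : Fin m) (l : Fin (t j)) (b : Bool) :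
    (cwGraph n m f t (fun _ _ => True)).Adj (Sum.inr (Sum.inr ⟨j, (l, b)⟩)) (Sum.inr (Sum.inr ⟨j, (l, !b)⟩)) := by
  rw [cwGraph, SimpleGraph.fromRel_adj]
  refine ⟨by simp, ?_⟩
  cases b
  · exact Or.inr (Or.inr (Or.inr (Or.inr ⟨j, l, rfl, rfl⟩)))
  · exact Or.inl (Or.inr (Or.inr (Or.inr ⟨j, l, rfl, rfl⟩)))

lemma nbr_z {k : Fin n} {l : Fin (f k)} {u : CWVert n m f t}
    (h : (cwGraph n m f t (fun _ _ => True)).Adj (Sum.inr (Sum.inl ⟨k, l⟩)) u) : u = Sum.inl (Sum.inl k) := by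
  rw [cwGraph, SimpleGraph.fromRel_adj] at h
  obtain ⟨-, h | h⟩ := h <;>
    rcases h with ⟨i, j, h1, h2, -⟩ | ⟨i, l', h1, h2⟩ | ⟨j, p, h1, h2⟩ | ⟨j, l', h1, h2⟩ <;>
    simp_all

lemma nbr_w {j : Fin m} {l : Fin (t j)} {b : Bool} {u : CWVert n m f t}
    (h : (cwGraph n m f t (fun _ _ => True)).Adj (Sum.inr (Sum.inr ⟨j, (l, b)⟩)) u) :
    u = Sum.inl (Sum.inr j) ∨ u = Sum.inr (Sum.inr ⟨j, (l, !b)⟩) := by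
  rw [cwGraph, SimpleGraph.fromRel_adj] at h
  obtain ⟨hne, h | h⟩ := h <;>
    rcases h with ⟨i, j', h1, h2, -⟩ | ⟨i, l', h1, h2⟩ | ⟨j', p, h1, h2⟩ | ⟨j', l', h1, h2⟩
  · exact absurd h1 (by simp)
  · exact absurd h1 (by simp)
  · exact absurd h1 (by simp)
  · obtain ⟨hj, hp⟩ : j = j' ∧ HEq (l, b) (l', true) := by simpa using h1
    subst hj
    obtain ⟨hl, hb⟩ : l = l' ∧ b = true := by simpa using eq_of_heq hp
    subst hl; subst hb
    exact Or.inr (by simpa using h2)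
  · exact absurd h2 (by simp)
  · exact absurd h2 (by simp)
  · obtain ⟨hj, -⟩ : j = j' ∧ HEq (l, b) p := by simpa using h2
    subst hj
    exact Or.inl h1
  · obtain ⟨hj, hp⟩ : j = j' ∧ HEq (l, b) (l', false) := by simpa using h2
    subst hj
    obtain ⟨hl, hb⟩ : l = l' ∧ b = false := by simpa using eq_of_heq hp
    subst hl; subst hb
    exact Or.inr (by simpa using h1)

lemma nbr_y {j : Fin m} {u : CWVert n m f t}
    (h : (cwGraph n m f t (fun _ _ => True)).Adj (Sum.inl (Sum.inr j)) u) :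
    (∃ i : Fin n, u = Sum.inl (Sum.inl i)) ∨
      (∃ p : Fin (t j) × Bool, u = Sum.inr (Sum.inr ⟨j, p⟩)) := by
  rw [cwGraph, SimpleGraph.fromRel_adj] at h
  obtain ⟨hne, h | h⟩ := h <;>
    rcases h with ⟨i, j', h1, h2, -⟩ | ⟨i, l', h1, h2⟩ | ⟨j', p, h1, h2⟩ | ⟨j', l', h1, h2⟩
  · exact absurd h1 (by simp)
  · exact absurd h1 (by simp)
  · obtain hj : j = j' := by simpa using h1
    subst hj
    exact Or.inr ⟨p, h2⟩
  · exact absurd h1 (by simp)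
  · exact Or.inl ⟨i, h1⟩
  · exact absurd h2 (by simp)
  · exact absurd h2 (by simp)
  · exact absurd h2 (by simp)

end Aux


/-- For a Cameron--Walker graph whose supporting connected bipartite graph is the
complete bipartite graph `K_{n,m}` (with `f k ≥ 1` leaves at each `x k`, and `t j ≥ 1`
pendant triangles at `y j` exactly for `j < m'`), every maximal independent set (facet of
the independence complex) is of form (I): all of `y_{m'+1},…,y_m`, all leaves, the `y i`
with `i ∈ I` for some `I ⊆ [m']`, and one vertex of each triangle at the `y_{i'}` with
`i' ∈ [m'] ∖ I`; or of form (II): `{x j : j ∈ J}` for some `∅ ≠ J ⊆ [n]`, the leaves at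
the `x_{j'}` with `j' ∉ J`, and one vertex of each pendant triangle. -/
theorem stmt17 (n m m' : ℕ) (f : Fin n → ℕ) (t : Fin m → ℕ)
    (hn : 1 ≤ n) (hm : 1 ≤ m) (hm' : m' ≤ m)
    (hf : ∀ k, 1 ≤ f k) (ht : ∀ j : Fin m, 1 ≤ t j ↔ (j : ℕ) < m')
    (A : Finset (CWVert n m f t))
    (hA : IsMaxIndepSet (cwGraph n m f t (fun _ _ => True)) A) :
    (∃ I : Finset (Fin m), (∀ j ∈ I, (j : ℕ) < m') ∧
      ∃ ε : ∀ j : Fin m, Fin (t j) → Bool,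
        ∀ v : CWVert n m f t, v ∈ A ↔
          (match v with
            | Sum.inl (Sum.inl _) => False
            | Sum.inl (Sum.inr j) => m' ≤ (j : ℕ) ∨ j ∈ I
            | Sum.inr (Sum.inl _) => True
            | Sum.inr (Sum.inr ⟨j, (l, b)⟩) => j ∉ I ∧ b = ε j l)) ∨
    (∃ J : Finset (Fin n), J.Nonempty ∧
      ∃ ε : ∀ j : Fin m, Fin (t j) → Bool,
        ∀ v : CWVert n m f t, v ∈ A ↔
          (match v with
            | Sum.inl (Sum.inl i) => i ∈ J
            | Sum.inl (Sum.inr _) => False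
            | Sum.inr (Sum.inl ⟨k, _⟩) => k ∉ J
            | Sum.inr (Sum.inr ⟨j, (l, b)⟩) => b = ε j l)) := by
  classical
  obtain ⟨hind, hmax⟩ := hA
  have key : ∀ v, v ∉ A →
      ∃ u ∈ A, (cwGraph n m f t (fun _ _ => True)).Adj v u := by
    intro v hv
    by_contra hc
    push_neg at hc
    have hBind : IsIndepSet (cwGraph n m f t (fun _ _ => True)) (insert v A) := by
      intro a ha b hb
      simp only [Finset.mem_insert] at ha hb
      rcases ha with rfl | ha <;> rcases hb with rfl | hb
      · exact fun h => ((cwGraph n m f t (fun _ _ => True)).loopless.irrefl _ h)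
      · exact hc b hb
      · exact fun h => hc a ha h.symm
      · exact hind a ha b hb
    have := hmax _ hBind (Finset.subset_insert _ _)
    exact hv (this ▸ Finset.mem_insert_self v A)
  have wpair : ∀ (j : Fin m) (l : Fin (t j)), Sum.inl (Sum.inr j) ∉ A →
      ((Sum.inr (Sum.inr ⟨j, (l, true)⟩) : CWVert n m f t) ∈ A ↔
        (Sum.inr (Sum.inr ⟨j, (l, false)⟩) : CWVert n m f t) ∉ A) := by
    intro j l hy
    constructor
    · intro h1 h2
      exact hind _ h1 _ h2 (by simpa using adj_ww j l true)
    · intro h2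
      by_contra h1
      obtain ⟨u, hu, hadj⟩ := key _ h1
      rcases nbr_w hadj with rfl | rfl
      · exact hy hu
      · exact h2 (by simpa using hu)
  set ε : ∀ j : Fin m, Fin (t j) → Bool := fun j l =>
    if (Sum.inr (Sum.inr ⟨j, (l, true)⟩) : CWVert n m f t) ∈ A then true else false with hε
  have wmem : ∀ (j : Fin m) (l : Fin (t j)) (b : Bool), Sum.inl (Sum.inr j) ∉ A →
      ((Sum.inr (Sum.inr ⟨j, (l, b)⟩) : CWVert n m f t) ∈ A ↔ b = ε j l) := by
    intro j l b hy
    have h := wpair j l hy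
    by_cases hw : (Sum.inr (Sum.inr ⟨j, (l, true)⟩) : CWVert n m f t) ∈ A
    · have he : ε j l = true := by simp [hε, hw]
      rw [he]
      cases b
      · exact iff_of_false (h.mp hw) (by simp)
      · exact iff_of_true hw rfl
    · have hw' : (Sum.inr (Sum.inr ⟨j, (l, false)⟩) : CWVert n m f t) ∈ A := by
        by_contra h2
        exact hw (h.mpr h2)
      have he : ε j l = false := by simp [hε, hw]
      rw [he]
      cases b
      · exact iff_of_true hw' rfl
      · exact iff_of_false hw (by simp)
  by_cases hx : ∃ i : Fin n, (Sum.inl (Sum.inl i) : CWVert n m f t) ∈ A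
  · -- form (II)
    obtain ⟨i0, hi0⟩ := hx
    have hyA : ∀ j : Fin m, (Sum.inl (Sum.inr j) : CWVert n m f t) ∉ A :=
      fun j hj => hind _ hi0 _ hj (adj_xy i0 j)
    refine Or.inr ⟨Finset.univ.filter (fun i => (Sum.inl (Sum.inl i) : CWVert n m f t) ∈ A),
      ⟨i0, by simp [hi0]⟩, ε, ?_⟩
    rintro ((i | j) | (⟨k, l⟩ | ⟨j, l, b⟩))
    · simp
    · simpa using hyA j
    · show _ ↔ k ∉ _
      simp only [Finset.mem_filter, Finset.mem_univ, true_and]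
      constructor
      · intro h hk
        exact hind _ hk _ h (adj_xz k l)
      · intro hk
        by_contra h
        obtain ⟨u, hu, hadj⟩ := key _ h
        have := nbr_z hadj
        subst this
        exact hk hu
    · exact wmem j l b (hyA j)
  · -- form (I)
    push_neg at hx
    have hleaf : ∀ (k : Fin n) (l : Fin (f k)),
        (Sum.inr (Sum.inl ⟨k, l⟩) : CWVert n m f t) ∈ A := by
      intro k l
      by_contra h
      obtain ⟨u, hu, hadj⟩ := key _ h
      have := nbr_z hadj
      subst this
      exact hx k hu
    have hybig : ∀ j : Fin m, m' ≤ (j : ℕ) →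
        (Sum.inl (Sum.inr j) : CWVert n m f t) ∈ A := by
      intro j hj
      by_contra h
      obtain ⟨u, hu, hadj⟩ := key _ h
      rcases nbr_y hadj with ⟨i, rfl⟩ | ⟨p, rfl⟩
      · exact hx i hu
      · have h0 : ¬ 1 ≤ t j := fun h1 => absurd ((ht j).mp h1) (not_lt.mpr hj)
        have := p.1.isLt
        omega
    refine Or.inl ⟨Finset.univ.filter
      (fun j => (j : ℕ) < m' ∧ (Sum.inl (Sum.inr j) : CWVert n m f t) ∈ A),
      fun j hj => (Finset.mem_filter.mp hj).2.1, ε, ?_⟩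
    rintro ((i | j) | (⟨k, l⟩ | ⟨j, l, b⟩))
    · simpa using hx i
    · show _ ↔ m' ≤ (j : ℕ) ∨ j ∈ _
      simp only [Finset.mem_filter, Finset.mem_univ, true_and]
      by_cases hj : (j : ℕ) < m'
      · constructor
        · intro h; exact Or.inr ⟨hj, h⟩
        · rintro (h | ⟨-, h⟩)
          · omega
          · exact h
      · exact iff_of_true (hybig j (le_of_not_gt hj)) (Or.inl (le_of_not_gt hj))
    · simpa using hleaf k l
    · show _ ↔ j ∉ _ ∧ b = ε j l
      have hjm : (j : ℕ) < m' := (ht j).mp (Nat.one_le_iff_ne_zero.mpr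
        (fun h0 => absurd l.isLt (by omega)))
      simp only [Finset.mem_filter, Finset.mem_univ, true_and]
      by_cases hy : (Sum.inl (Sum.inr j) : CWVert n m f t) ∈ A
      · refine iff_of_false ?_ ?_
        · intro h
          exact hind _ hy _ h (adj_yw j (l, b))
        · rintro ⟨h, -⟩
          exact h ⟨hjm, hy⟩
      · have := wmem j l b hy
        constructor
        · intro h
          exact ⟨fun hc => hy hc.2, this.mp h⟩
        · rintro ⟨-, h⟩
          exact this.mpr h
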